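/- Let H be an L-subgyrogroup of a topological gyrogroup G such that all compact subspaces of H and of the quotient space G/H are metrizable. Then all compact subspaces of G are metrizable. -/

import Mathlib

/-- A gyrogroup: groupoid with identity, inverses, gyroautomorphisms satisfying
the left gyroassociative law and the left loop property. -/
class Gyrogroup (G : Type*) where
  add : G → G → G
  zero : G
  neg : G → G
  gyr : G → G → G → G
  zero_add : ∀ a, add zero a = a
  add_zero : ∀ a, add a zero = a
  neg_add : ∀ a, add (neg a) a = zero
  add_neg : ∀ a, add a (neg a) = zero
  gyr_add : ∀ x y a b, gyr x y (add a b) = add (gyr x y a) (gyr x y b)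
  gyr_bijective : ∀ x y, Function.Bijective (gyr x y)
  left_gyroassoc : ∀ x y z, add x (add y z) = add (add x y) (gyr x y z)
  loop : ∀ x y, gyr (add x y) y = gyr x y

/-- `H` is a subgyrogroup of `G`: it contains the identity, is closed under the
operation and inverses (hence forms a gyrogroup under the inherited operation),
and the restriction of each `gyr[a,b]`, `a b ∈ H`, is an automorphism of `H`. -/
def IsSubgyrogroup {G : Type*} [Gyrogroup G] (H : Set G) : Prop :=
  Gyrogroup.zero ∈ H ∧
  (∀ a ∈ H, Gyrogroup.neg a ∈ H) ∧
  (∀ a ∈ H, ∀ b ∈ H, Gyrogroup.add a b ∈ H) ∧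
  (∀ a ∈ H, ∀ b ∈ H, Gyrogroup.gyr a b '' H = H)

/-- A topological gyrogroup: the operation is jointly continuous and inversion
is continuous. -/
class TopGyrogroup (G : Type*) [TopologicalSpace G] extends Gyrogroup G where
  continuous_add : Continuous fun p : G × G => add p.1 p.2
  continuous_neg : Continuous neg

/-- `H` is an L-subgyrogroup: a subgyrogroup with `gyr[a,h](H) = H` for all
`a ∈ G`, `h ∈ H`. -/
def IsLSubgyrogroup {G : Type*} [Gyrogroup G] (H : Set G) : Prop :=
  IsSubgyrogroup H ∧ ∀ a : G, ∀ h ∈ H, Gyrogroup.gyr a h '' H = H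

/-- The setoid identifying points of `G` with the same left coset `a ⊕ H`. -/
def cosetSetoid (G : Type*) [Gyrogroup G] (H : Set G) : Setoid G :=
  Setoid.ker (fun a => Gyrogroup.add a '' H)

/-- The coset space `G/H` of left cosets, with the quotient topology. -/
abbrev CosetSpace (G : Type*) [Gyrogroup G] (H : Set G) := Quotient (cosetSetoid G H)

/-! ### Auxiliary gyrogroup algebra -/

section GyroAlgebra

variable {G : Type*} [Gyrogroup G]

open Gyrogroup

private lemma gyr_inj (x y : G) : Function.Injective (gyr x y) :=
  (Gyrogroup.gyr_bijective x y).1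

private lemma lc1 (a b : G) :
    add (neg a) (add a b) = gyr (neg a) a b := by
  rw [Gyrogroup.left_gyroassoc, Gyrogroup.neg_add, Gyrogroup.zero_add]

private lemma gyr_neg_self_zero (a : G) : gyr (neg a) a (zero : G) = zero := by
  have h := lc1 a (zero : G)
  rw [Gyrogroup.add_zero, Gyrogroup.neg_add] at h
  exact h.symm

private lemma gyr_zero (x y : G) : gyr x y (zero : G) = zero := by
  have h := Gyrogroup.left_gyroassoc x y (zero : G)
  rw [Gyrogroup.add_zero] at h
  have h2 : add (neg (add x y)) (add (add x y) (gyr x y zero))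
      = add (neg (add x y)) (add x y) := by rw [← h]
  rw [lc1, Gyrogroup.neg_add] at h2
  have h3 : gyr (neg (add x y)) (add x y) (gyr x y zero)
      = gyr (neg (add x y)) (add x y) zero := by
    rw [h2, gyr_neg_self_zero]
  exact gyr_inj _ _ h3

private lemma gyr_zero_left (a b : G) : gyr (zero : G) a b = b := by
  have h := Gyrogroup.left_gyroassoc (zero : G) a b
  rw [Gyrogroup.zero_add, Gyrogroup.zero_add] at h
  have h2 : add (neg a) (add a b) = add (neg a) (add a (gyr zero a b)) := by
    rw [← h]
  rw [lc1, lc1] at h2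
  exact (gyr_inj _ _ h2).symm

private lemma gyr_neg_self (a b : G) : gyr (neg a) a b = b := by
  have h := Gyrogroup.loop (neg a) a
  rw [Gyrogroup.neg_add] at h
  rw [← h, gyr_zero_left]

private lemma left_cancel (a b : G) : add (neg a) (add a b) = b := by
  rw [lc1, gyr_neg_self]

private lemma gyro_add_left_injective (a : G) : Function.Injective (add a) := by
  intro b c h
  have h2 := congrArg (add (neg a)) h
  rwa [left_cancel, left_cancel] at h2

private lemma neg_neg' (a : G) : neg (neg a) = a := by
  apply gyro_add_left_injective (neg a)
  rw [Gyrogroup.add_neg, Gyrogroup.neg_add]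

private lemma left_cancel' (a b : G) : add a (add (neg a) b) = b := by
  have h := left_cancel (neg a) b
  rwa [neg_neg'] at h

private lemma gyro_eq_of_sub_eq_zero {x y : G} (h : add (neg x) y = zero) : x = y := by
  have h2 := congrArg (add x) h
  rw [left_cancel', Gyrogroup.add_zero] at h2
  exact h2.symm

end GyroAlgebra

/-! ### Metrizability from a Gδ diagonal -/

/-- In a compact Hausdorff space, the neighborhood filter of a compact Gδ set is
countably generated. -/
private lemma isCountablyGenerated_nhdsSet_of_isCompact_isGδ {X : Type*}
    [TopologicalSpace X] [CompactSpace X] [T2Space X] {s : Set X}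
    (hs : IsCompact s) (hGδ : IsGδ s) : (nhdsSet s).IsCountablyGenerated := by
  obtain ⟨f, hfs, -, -, hf01⟩ :=
    exists_continuous_one_zero_of_isCompact_of_isGδ hs hGδ isClosed_empty
      (Set.disjoint_empty s)
  set F : ℕ → Set X := fun n => f ⁻¹' Set.Ioi (1 - 1 / (n + 1)) with hF
  have hFopen : ∀ n, IsOpen (F n) := fun n => isOpen_Ioi.preimage f.continuous
  have hsF : ∀ n, s ⊆ F n := by
    intro n x hx
    have hfx : f x = 1 := by
      have := hfs ▸ hx
      simpa using this
    simp only [F, Set.mem_preimage, Set.mem_Ioi, hfx]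
    have : (0 : ℝ) < 1 / (n + 1) := by positivity
    linarith
  have basis : (nhdsSet s).HasBasis (fun _ : ℕ => True) F := by
    rw [Filter.hasBasis_iff]
    intro O
    constructor
    · intro hO
      obtain ⟨U, hUopen, hsU, hUO⟩ := mem_nhdsSet_iff_exists.mp hO
      rcases Set.eq_empty_or_nonempty Uᶜ with he | hne
      · refine ⟨0, trivial, fun x _ => hUO ?_⟩
        have hU : U = Set.univ := by rwa [Set.compl_empty_iff] at he
        simp [hU]
      · have hUc : IsCompact Uᶜ := hUopen.isClosed_compl.isCompact
        obtain ⟨x₀, hx₀U, hx₀max⟩ := hUc.exists_isMaxOn hne f.continuous.continuousOn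
        have hx₀s : x₀ ∉ s := fun hmem => hx₀U (hsU hmem)
        have hfx₀ : f x₀ < 1 := by
          rcases lt_or_eq_of_le (hf01 x₀).2 with h | h
          · exact h
          · exact absurd (by rw [hfs]; exact h : x₀ ∈ s) hx₀s
        obtain ⟨n, hn⟩ := exists_nat_one_div_lt (by linarith : (0 : ℝ) < 1 - f x₀)
        refine ⟨n, trivial, fun x hx => ?_⟩
        apply hUO
        by_contra hxU
        have h1 : f x ≤ f x₀ := hx₀max (by simpa using hxU)
        have h2 : 1 - 1 / (n + 1 : ℝ) < f x := hx
        linarith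
    · rintro ⟨n, -, hFO⟩
      exact Filter.mem_of_superset ((hFopen n).mem_nhdsSet.mpr (hsF n)) hFO
  exact basis.isCountablyGenerated

/-- Šneĭder's theorem: a compact Hausdorff space with a Gδ diagonal is
metrizable. -/
private theorem metrizableSpace_of_isGδ_diagonal {X : Type*} [TopologicalSpace X]
    [CompactSpace X] [T2Space X] (h : IsGδ (Set.diagonal X)) :
    TopologicalSpace.MetrizableSpace X := by
  have hdc : IsCompact (Set.diagonal X) := isClosed_diagonal.isCompact
  letI u : UniformSpace X := uniformSpaceOfCompactR1
  haveI : (uniformity X).IsCountablyGenerated := by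
    have hu : uniformity X = nhdsSet (Set.diagonal X) := rfl
    rw [hu]
    exact isCountablyGenerated_nhdsSet_of_isCompact_isGδ hdc h
  exact UniformSpace.metrizableSpace

/-! ### Main theorem -/

/-- If all compact subspaces of an L-subgyrogroup `H` and of `G/H` are
metrizable, then all compact subspaces of `G` are metrizable. -/
theorem compact_subsets_metrizable {G : Type*} [TopologicalSpace G] [T2Space G]
    [TopGyrogroup G] (H : Set G) (hH : IsLSubgyrogroup H)
    (hHcpt : ∀ K : Set G, K ⊆ H → IsCompact K → TopologicalSpace.MetrizableSpace K)
    (hQcpt : ∀ K : Set (CosetSpace G H), IsCompact K →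
      TopologicalSpace.MetrizableSpace K) :
    ∀ K : Set G, IsCompact K → TopologicalSpace.MetrizableSpace K := by
  intro K hK
  haveI : CompactSpace ↥K := isCompact_iff_compactSpace.mp hK
  set π : G → CosetSpace G H := Quotient.mk (cosetSetoid G H) with hπ
  have hπcont : Continuous π := continuous_quot_mk
  have hKQ : IsCompact (π '' K) := hK.image hπcont
  haveI M1 : TopologicalSpace.MetrizableSpace ↥(π '' K) := hQcpt _ hKQ
  letI : MetricSpace ↥(π '' K) := TopologicalSpace.metrizableSpaceMetric _
  -- the map to the (metrizable) quotient image, in coordinates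
  let p : ↥K × ↥K → ↥(π '' K) × ↥(π '' K) := fun z =>
    (⟨π z.1, ⟨z.1, z.1.2, rfl⟩⟩, ⟨π z.2, ⟨z.2, z.2.2, rfl⟩⟩)
  have hpcont : Continuous p := by
    apply Continuous.prodMk
    · exact ((hπcont.comp continuous_subtype_val).comp continuous_fst).subtype_mk _
    · exact ((hπcont.comp continuous_subtype_val).comp continuous_snd).subtype_mk _
  let A : Set (↥K × ↥K) := p ⁻¹' Set.diagonal ↥(π '' K)
  have hAclosed : IsClosed A := isClosed_diagonal.preimage hpcont
  have hAcpt : IsCompact A := hAclosed.isCompact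
  have hdiagc : IsClosed (Set.diagonal ↥(π '' K)) := isClosed_diagonal
  obtain ⟨O, hOopen, hOeq⟩ := hdiagc.isGδ.eq_iInter_nat
  have hBopen : ∀ n, IsOpen (p ⁻¹' O n) := fun n => (hOopen n).preimage hpcont
  have hBeq : A = ⋂ n, p ⁻¹' O n := by
    show p ⁻¹' Set.diagonal ↥(π '' K) = _
    rw [hOeq, Set.preimage_iInter]
  -- the "difference" map
  let D : ↥K × ↥K → G := fun z => Gyrogroup.add (Gyrogroup.neg (z.1 : G)) (z.2 : G)
  have hDcont : Continuous D := by
    have h1 : Continuous fun z : ↥K × ↥K =>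
        ((Gyrogroup.neg (z.1 : G), (z.2 : G)) : G × G) :=
      ((TopGyrogroup.continuous_neg.comp
        (continuous_subtype_val.comp continuous_fst)).prodMk
        (continuous_subtype_val.comp continuous_snd))
    exact TopGyrogroup.continuous_add.comp h1
  -- the image of A under D lies in H
  have hSsub : D '' A ⊆ H := by
    rintro g ⟨⟨x, y⟩, hAxy, rfl⟩
    have hxy : π (x : G) = π (y : G) := by
      have h := congrArg Subtype.val hAxy
      exact h
    have hker : Gyrogroup.add (x : G) '' H = Gyrogroup.add (y : G) '' H :=
      Quotient.exact hxy
    have hy : (y : G) ∈ Gyrogroup.add (x : G) '' H := by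
      rw [hker]
      exact ⟨Gyrogroup.zero, hH.1.1, Gyrogroup.add_zero _⟩
    obtain ⟨h, hh, hxh⟩ := hy
    have hD : D (x, y) = h := by
      show Gyrogroup.add (Gyrogroup.neg (x : G)) (y : G) = h
      rw [← hxh, left_cancel]
    rw [hD]
    exact hh
  have hScpt : IsCompact (D '' A) := hAcpt.image hDcont
  haveI M2 : TopologicalSpace.MetrizableSpace ↥(D '' A) := hHcpt _ hSsub hScpt
  letI : MetricSpace ↥(D '' A) := TopologicalSpace.metrizableSpaceMetric _
  -- the zero point inside D '' A is a Gδ set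
  have hT : IsGδ {z : ↥(D '' A) | (z : G) = Gyrogroup.zero} :=
    (isClosed_eq continuous_subtype_val continuous_const).isGδ
  obtain ⟨V, hVopen, hVeq⟩ := hT.eq_iInter_nat
  choose W hWopen hWeq using fun n => isOpen_induced_iff.mp (hVopen n)
  -- key: the diagonal of K is a countable intersection of open sets
  have key : Set.diagonal ↥K = (⋂ n, p ⁻¹' O n) ∩ ⋂ n, D ⁻¹' W n := by
    apply Set.Subset.antisymm
    · rintro ⟨x, y⟩ hd
      have hxy : x = y := hd
      subst hxy
      have hzA : ((x, x) : ↥K × ↥K) ∈ A := by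
        show p (x, x) ∈ Set.diagonal ↥(π '' K)
        rfl
      have hD0 : D (x, x) = Gyrogroup.zero := by
        show Gyrogroup.add (Gyrogroup.neg (x : G)) (x : G) = Gyrogroup.zero
        exact Gyrogroup.neg_add _
      have h0S : Gyrogroup.zero ∈ D '' A := ⟨(x, x), hzA, hD0⟩
      have h0T : (⟨Gyrogroup.zero, h0S⟩ : ↥(D '' A)) ∈ ⋂ n, V n := by
        rw [← hVeq]; rfl
      constructor
      · rw [← hBeq]; exact hzA
      · refine Set.mem_iInter.mpr fun n => ?_
        have h1 : (⟨Gyrogroup.zero, h0S⟩ : ↥(D '' A)) ∈ V n :=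
          Set.mem_iInter.mp h0T n
        rw [← hWeq n] at h1
        show D (x, x) ∈ W n
        rw [hD0]
        exact h1
    · rintro z ⟨hB, hW⟩
      have hzA : z ∈ A := by rw [hBeq]; exact hB
      have hDS : D z ∈ D '' A := ⟨z, hzA, rfl⟩
      have hmem : (⟨D z, hDS⟩ : ↥(D '' A)) ∈ ⋂ n, V n := by
        refine Set.mem_iInter.mpr fun n => ?_
        rw [← hWeq n]
        exact Set.mem_iInter.mp hW n
      rw [← hVeq] at hmem
      have hD0 : D z = Gyrogroup.zero := hmem
      have hxy : (z.1 : G) = (z.2 : G) := gyro_eq_of_sub_eq_zero hD0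
      show z.1 = z.2
      exact Subtype.ext hxy
  have hdiagGδ : IsGδ (Set.diagonal ↥K) := by
    rw [key]
    exact (IsGδ.iInter fun n => (hBopen n).isGδ).inter
      (IsGδ.iInter fun n => ((hWopen n).preimage hDcont).isGδ)
  exact metrizableSpace_of_isGδ_diagonal hdiagGδ
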